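/- Let (X,μ) be a measure space, 0<q≤∞ and J ⊆ (0,∞) with m_J = inf J > 0. If m_J ∈ J and M_J = sup J ∉ J (with M_J < ∞), then ⋂_{p∈J} L_{p,q}(X,μ) = ⋂_{p∈[m_J,M_J)} L_{p,q}(X,μ). -/

import Mathlib

open MeasureTheory Set ENNReal

noncomputable section

variable {X : Type*} [MeasurableSpace X]

/-- The distribution function `d_f(α) = μ {x : |f x| > α}`. -/
def distFun (μ : Measure X) (f : X → ℝ) (α : ℝ) : ℝ≥0∞ :=
  μ {x | α < |f x|}

/-- The decreasing rearrangement `f*(t) = inf {s > 0 : d_f(s) ≤ t}`, with `inf ∅ = ∞`. -/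
def rearr (μ : Measure X) (f : X → ℝ) (t : ℝ) : ℝ≥0∞ :=
  ⨅ (s : ℝ) (_ : 0 < s ∧ distFun μ f s ≤ ENNReal.ofReal t), ENNReal.ofReal s

/-- The Lorentz quasi-norm `‖f‖_{L_{p,q}}` (for `q = ∞` the weak norm `sup_t t^{1/p} f*(t)`). -/
def lorentzNorm (μ : Measure X) (f : X → ℝ) (p q : ℝ≥0∞) : ℝ≥0∞ :=
  if q = ∞ then ⨆ t ∈ Ioi (0 : ℝ), ENNReal.ofReal t ^ (1 / p).toReal * rearr μ f t
  else (∫⁻ t in Ioi (0 : ℝ),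
      (ENNReal.ofReal t ^ (1 / p).toReal * rearr μ f t) ^ q.toReal / ENNReal.ofReal t) ^
      (1 / q.toReal)

/-- The Lorentz space `L_{p,q}(X, μ)`, as the set of measurable functions with
finite Lorentz quasi-norm. -/
def Lorentz (μ : Measure X) (p q : ℝ≥0∞) : Set (X → ℝ) :=
  {f | Measurable f ∧ lorentzNorm μ f p q < ∞}

lemma rearr_anti (μ : Measure X) (f : X → ℝ) : Antitone (rearr μ f) := by
  intro t t' h
  refine le_iInf₂ fun s hs => ?_
  exact iInf_le_of_le s (iInf_le_of_le ⟨hs.1, hs.2.trans (ofReal_le_ofReal h)⟩ le_rfl)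

lemma rearr_meas (μ : Measure X) (f : X → ℝ) : Measurable (rearr μ f) :=
  (rearr_anti μ f).measurable

lemma rpow_add_le (x y : ℝ≥0∞) (r : ℝ) (hr : 0 ≤ r) :
    (x + y) ^ r ≤ 2 ^ r * (x ^ r + y ^ r) := by
  calc (x + y) ^ r ≤ (2 * max x y) ^ r := by
        apply ENNReal.rpow_le_rpow _ hr
        rcases le_total x y with h | h
        · calc x + y ≤ y + y := by gcongr
            _ = 2 * y := (two_mul y).symm
            _ ≤ 2 * max x y := by gcongr; exact le_max_right _ _
        · calc x + y ≤ x + x := by gcongr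
            _ = 2 * x := (two_mul x).symm
            _ ≤ 2 * max x y := by gcongr; exact le_max_left _ _
    _ = 2 ^ r * max x y ^ r := ENNReal.mul_rpow_of_nonneg _ _ hr
    _ ≤ 2 ^ r * (x ^ r + y ^ r) := by
        gcongr
        rcases max_cases x y with ⟨h, _⟩ | ⟨h, _⟩ <;> rw [h]
        · exact le_self_add
        · exact le_add_self

lemma pow_mid {t : ℝ} (ht : 0 < t) {a b c : ℝ} (hac : a ≤ c) (hcb : c ≤ b) :
    ENNReal.ofReal t ^ c ≤ ENNReal.ofReal t ^ a + ENNReal.ofReal t ^ b := by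
  rcases le_total t 1 with h | h
  · have hx : ENNReal.ofReal t ≤ 1 := by
      rw [← ENNReal.ofReal_one]; exact ofReal_le_ofReal h
    exact le_add_right (ENNReal.rpow_le_rpow_of_exponent_ge hx hac)
  · have hx : 1 ≤ ENNReal.ofReal t := by
      rw [← ENNReal.ofReal_one]; exact ofReal_le_ofReal h
    exact le_add_left (ENNReal.rpow_le_rpow_of_exponent_le hx hcb)

lemma key (μ : Measure X) (f : X → ℝ) (q : ℝ≥0∞) (hq : 0 < q) (p0 p1 p : ℝ≥0∞)
    (h0 : p0 ≠ 0) (h1 : p1 ≠ ∞) (hl : p0 ≤ p) (hr : p ≤ p1)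
    (hf0 : lorentzNorm μ f p0 q < ∞) (hf1 : lorentzNorm μ f p1 q < ∞) :
    lorentzNorm μ f p q < ∞ := by
  have hp0 : p ≠ 0 := fun h => h0 (le_antisymm (h ▸ hl) zero_le)
  have hp1 : p ≠ ∞ := fun h => h1 (top_le_iff.mp (h ▸ hr))
  set a := (1 / p1).toReal with ha
  set b := (1 / p0).toReal with hb
  set c := (1 / p).toReal with hc
  have hac : a ≤ c := by
    apply ENNReal.toReal_mono (by simp [hp0])
    exact ENNReal.div_le_div_left (by exact_mod_cast hr) 1
  have hcb : c ≤ b := by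
    apply ENNReal.toReal_mono (by simp [h0])
    exact ENNReal.div_le_div_left hl 1
  by_cases hqt : q = ∞
  · subst hqt
    simp only [lorentzNorm, if_pos rfl] at *
    have hS : (⨆ t ∈ Ioi (0:ℝ), ENNReal.ofReal t ^ c * rearr μ f t)
        ≤ (⨆ t ∈ Ioi (0:ℝ), ENNReal.ofReal t ^ a * rearr μ f t)
          + ⨆ t ∈ Ioi (0:ℝ), ENNReal.ofReal t ^ b * rearr μ f t := by
      refine iSup₂_le fun t ht => ?_
      calc ENNReal.ofReal t ^ c * rearr μ f t
          ≤ (ENNReal.ofReal t ^ a + ENNReal.ofReal t ^ b) * rearr μ f t :=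
            mul_le_mul_left (pow_mid ht hac hcb) _
        _ = ENNReal.ofReal t ^ a * rearr μ f t + ENNReal.ofReal t ^ b * rearr μ f t :=
            add_mul _ _ _
        _ ≤ _ := add_le_add (le_iSup₂ (f := fun t (_ : t ∈ Ioi (0:ℝ)) =>
              ENNReal.ofReal t ^ a * rearr μ f t) t ht)
              (le_iSup₂ (f := fun t (_ : t ∈ Ioi (0:ℝ)) =>
              ENNReal.ofReal t ^ b * rearr μ f t) t ht)
    exact lt_of_le_of_lt hS (ENNReal.add_lt_top.mpr ⟨hf1, hf0⟩)
  · have hqr : 0 < q.toReal := ENNReal.toReal_pos hq.ne' hqt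
    simp only [lorentzNorm, if_neg hqt] at *
    set qr := q.toReal
    set I : ℝ → ℝ≥0∞ := fun e => ∫⁻ t in Ioi (0:ℝ),
        (ENNReal.ofReal t ^ e * rearr μ f t) ^ qr / ENNReal.ofReal t with hI
    have hIb : I b < ∞ :=
      (ENNReal.rpow_lt_top_iff_of_pos (x := I b) (by positivity : (0:ℝ) < 1/qr)).mp hf0
    have hIa : I a < ∞ :=
      (ENNReal.rpow_lt_top_iff_of_pos (x := I a) (by positivity : (0:ℝ) < 1/qr)).mp hf1
    have hmeasI : ∀ e : ℝ, Measurable fun t =>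
        (ENNReal.ofReal t ^ e * rearr μ f t) ^ qr / ENNReal.ofReal t := by
      intro e
      exact (((ENNReal.continuous_rpow_const.measurable.comp measurable_ofReal).mul
        (rearr_meas μ f)).pow_const _ |>.div measurable_ofReal)
    have hmain : I c ≤ 2 ^ qr * (I a + I b) := by
      calc I c ≤ ∫⁻ t in Ioi (0:ℝ), 2 ^ qr *
            ((ENNReal.ofReal t ^ a * rearr μ f t) ^ qr / ENNReal.ofReal t
              + (ENNReal.ofReal t ^ b * rearr μ f t) ^ qr / ENNReal.ofReal t) := by
            refine setLIntegral_mono' measurableSet_Ioi fun t ht => ?_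
            have h1 : (ENNReal.ofReal t ^ c * rearr μ f t) ^ qr
                ≤ 2 ^ qr * ((ENNReal.ofReal t ^ a * rearr μ f t) ^ qr
                  + (ENNReal.ofReal t ^ b * rearr μ f t) ^ qr) := by
              calc (ENNReal.ofReal t ^ c * rearr μ f t) ^ qr
                  ≤ ((ENNReal.ofReal t ^ a + ENNReal.ofReal t ^ b) * rearr μ f t) ^ qr :=
                    ENNReal.rpow_le_rpow (mul_le_mul_left (pow_mid ht hac hcb) _) hqr.le
                _ = (ENNReal.ofReal t ^ a * rearr μ f t
                    + ENNReal.ofReal t ^ b * rearr μ f t) ^ qr := by rw [add_mul]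
                _ ≤ _ := rpow_add_le _ _ _ hqr.le
            calc (ENNReal.ofReal t ^ c * rearr μ f t) ^ qr / ENNReal.ofReal t
                ≤ 2 ^ qr * ((ENNReal.ofReal t ^ a * rearr μ f t) ^ qr
                  + (ENNReal.ofReal t ^ b * rearr μ f t) ^ qr) / ENNReal.ofReal t :=
                  ENNReal.div_le_div_right h1 _
              _ = _ := by rw [mul_div_assoc, ENNReal.add_div]
        _ = 2 ^ qr * (I a + I b) := by
            rw [lintegral_const_mul' _ _
              (ENNReal.rpow_ne_top_of_nonneg hqr.le (by norm_num)),
              lintegral_add_left (hmeasI a)]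
    have hIc : I c < ∞ := lt_of_le_of_lt hmain (by
      apply ENNReal.mul_lt_top
      · exact ENNReal.rpow_lt_top_of_nonneg hqr.le (by norm_num)
      · exact ENNReal.add_lt_top.mpr ⟨hIa, hIb⟩)
    exact ENNReal.rpow_lt_top_of_nonneg (by positivity) hIc.ne

/-- If `m_J ∈ J` and `M_J ∉ J` (`M_J < ∞`) then
`⋂_{p∈J} L_{p,q} = ⋂_{p∈[m_J,M_J)} L_{p,q}`. -/
theorem stmt7 (μ : Measure X) (q : ℝ≥0∞) (hq : 0 < q) (J : Set ℝ≥0∞)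
    (hJ : J ⊆ Ioo 0 ∞) (hm : 0 < sInf J) (hmJ : sInf J ∈ J) (hMJ : sSup J ∉ J)
    (hM : sSup J ≠ ∞) :
    (⋂ p ∈ J, Lorentz μ p q) = ⋂ p ∈ Ico (sInf J) (sSup J), Lorentz μ p q := by
  apply Subset.antisymm
  · intro f hf
    simp only [mem_iInter] at hf ⊢
    intro p hp
    have hfm := hf _ hmJ
    refine ⟨hfm.1, ?_⟩
    obtain ⟨p1, hp1J, hpp1⟩ := lt_sSup_iff.mp hp.2
    exact key μ f q hq (sInf J) p1 p hm.ne' (hJ hp1J).2.ne hp.1 hpp1.le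
      (hfm.2) (hf _ hp1J).2
  · refine biInter_subset_biInter_left fun p hp => ?_
    refine ⟨sInf_le hp, lt_of_le_of_ne (le_sSup hp) fun h => hMJ (h ▸ hp)⟩
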